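/- Let A be an ℕ-graded commutative Noetherian ring. Then the Veronese subring A^{(d)} = ⨁_{n≥0} A_{dn} is Noetherian for every d > 0, and if M is a finitely generated ℤ-graded A-module then ⨁_{n≥0} M_{dn} is a finitely generated A^{(d)}-module. -/

import Mathlib

open DirectSum

section Aux

theorem exists_finset_gens' {R M : Type*} [CommRing R] [AddCommGroup M] [Module R M]
    (T : Set M) (h : (Submodule.span R T).FG) :
    ∃ S : Finset M, ↑S ⊆ T ∧ Submodule.span R (↑S : Set M) = Submodule.span R T := by
  classical
  obtain ⟨F, hF⟩ := h
  have key : ∀ x : M, x ∈ F → ∃ T' : Finset M, ↑T' ⊆ T ∧ x ∈ Submodule.span R (↑T' : Set M) :=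
    fun x hx => Submodule.mem_span_finite_of_mem_span (hF ▸ Submodule.subset_span hx)
  choose f hf1 hf2 using key
  refine ⟨F.attach.biUnion (fun x => f x.1 x.2), ?_, le_antisymm
    (Submodule.span_mono ?_) ?_⟩
  · intro a ha
    simp only [Finset.coe_biUnion, Set.mem_iUnion] at ha
    obtain ⟨x, hx, ha⟩ := ha
    exact hf1 _ _ ha
  · intro a ha
    simp only [Finset.coe_biUnion, Set.mem_iUnion] at ha
    obtain ⟨x, hx, ha⟩ := ha
    exact hf1 _ _ ha
  · rw [← hF]
    refine Submodule.span_le.2 fun x hx => ?_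
    refine Submodule.span_mono ?_ (hf2 x hx)
    intro a ha
    simp only [Finset.coe_biUnion, Set.mem_iUnion]
    exact ⟨⟨x, hx⟩, Finset.mem_attach _ _, ha⟩

variable {A : Type*} [CommRing A] (𝒜 : ℤ → Submodule ℤ A) [GradedAlgebra 𝒜]

theorem stmt15_proj0_mul (hA : ∀ n : ℤ, n < 0 → 𝒜 n = ⊥) (x y : A) :
    (decompose 𝒜 (x * y) 0 : A) = (decompose 𝒜 x 0 : A) * (decompose 𝒜 y 0 : A) := by
  induction x using DirectSum.Decomposition.inductionOn 𝒜 with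
  | zero => simp
  | @homogeneous i c =>
    obtain ⟨c, hc⟩ := c
    induction y using DirectSum.Decomposition.inductionOn 𝒜 with
    | zero => simp
    | @homogeneous j c' => ?_
    | add c d hc hd =>
      simp only at hc hd
      simp only [mul_add, decompose_add, DirectSum.add_apply, Submodule.coe_add, hc, hd]
    obtain ⟨c', hc'⟩ := c'
    by_cases h : i + j = 0
    · rcases lt_trichotomy i 0 with hi | hi | hi
      · have : c = 0 := by simpa [hA i hi] using hc
        simp [this]
      · subst hi
        have hj : j = 0 := by omega
        subst hj
        rw [decompose_of_mem_same 𝒜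
            (show c * c' ∈ 𝒜 0 by simpa using SetLike.mul_mem_graded hc hc'),
          decompose_of_mem_same 𝒜 hc, decompose_of_mem_same 𝒜 hc']
      · have hj : j < 0 := by omega
        have : c' = 0 := by simpa [hA j hj] using hc'
        simp [this]
    · rw [decompose_of_mem_ne 𝒜 (SetLike.mul_mem_graded hc hc') h]
      rcases show i ≠ 0 ∨ j ≠ 0 by omega with h' | h'
      · simp [decompose_of_mem_ne 𝒜 hc h']
      · simp [decompose_of_mem_ne 𝒜 hc' h']
  | add a b ha hb =>
    simp only at ha hb
    simp only [add_mul, decompose_add, DirectSum.add_apply, Submodule.coe_add, ha, hb]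

/-- degree-zero projection as ring hom, for nonneg ℤ-grading -/
def stmt15projZero (hA : ∀ n : ℤ, n < 0 → 𝒜 n = ⊥) : A →+* ↥(SetLike.GradeZero.subring 𝒜) where
  toFun a := ⟨decompose 𝒜 a 0, (decompose 𝒜 a 0).2⟩
  map_one' := Subtype.ext <| by
    have : (1 : A) ∈ 𝒜 0 := SetLike.one_mem_graded 𝒜
    show (decompose 𝒜 1 0 : A) = 1
    exact decompose_of_mem_same 𝒜 this
  map_zero' := Subtype.ext <| by simp
  map_add' x y := Subtype.ext <| by simp
  map_mul' x y := Subtype.ext <| stmt15_proj0_mul 𝒜 hA x y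

theorem stmt15_A0_noetherian (hA : ∀ n : ℤ, n < 0 → 𝒜 n = ⊥) (hN : IsNoetherianRing A) :
    IsNoetherianRing ↥(SetLike.GradeZero.subring 𝒜) :=
  isNoetherianRing_of_surjective A _ (stmt15projZero 𝒜 hA)
    (fun a => ⟨a, Subtype.ext <| by simp [stmt15projZero, decompose_coe, of_eq_same, decompose_of_mem_same 𝒜 a.2]⟩)

theorem stmt15_homog_mem_closure (hA : ∀ n : ℤ, n < 0 → 𝒜 n = ⊥)
    (S : Finset A) (hS : ↑S ⊆ (⋃ (n : ℤ) (_ : 0 < n), (𝒜 n : Set A)))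
    (hspan : Ideal.span (↑S : Set A) = Ideal.span (⋃ (n : ℤ) (_ : 0 < n), (𝒜 n : Set A))) :
    ∀ (N : ℕ) (n : ℤ), n ≤ N → ∀ a ∈ 𝒜 n,
      a ∈ Subring.closure ((𝒜 0 : Set A) ∪ ↑S) := by
  classical
  intro N
  induction N using Nat.strong_induction_on with
  | _ N ih =>
    intro n hn a ha
    rcases lt_trichotomy n 0 with h0 | h0 | h0
    · have : a = 0 := by simpa [hA n h0] using ha
      exact this ▸ zero_mem _
    · subst h0
      exact Subring.subset_closure (Or.inl ha)
    · have haI : a ∈ Ideal.span (↑S : Set A) := by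
        rw [hspan]
        exact Ideal.subset_span (Set.mem_iUnion.2 ⟨n, Set.mem_iUnion.2 ⟨h0, ha⟩⟩)
      rw [Ideal.span, Submodule.mem_span_finset] at haI
      obtain ⟨f, -, hf⟩ := haI
      have key : ∀ s ∈ S, (decompose 𝒜 (f s * s) n : A)
          ∈ Subring.closure ((𝒜 0 : Set A) ∪ ↑S) := by
        intro s hs
        obtain ⟨_, ⟨m, rfl⟩, hms⟩ := hS hs
        obtain ⟨_, ⟨hm, rfl⟩, hsm⟩ := hms
        have hdec : (decompose 𝒜 (f s * s) ((n - m) + m) : A)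
            = (decompose 𝒜 (f s) (n - m) : A) * s :=
          DirectSum.coe_decompose_mul_add_of_right_mem 𝒜 hsm
        rw [show n = (n - m) + m by ring, hdec]
        exact mul_mem (ih (N - 1) (by omega) (n - m) (by omega) _ (SetLike.coe_mem _))
          (Subring.subset_closure (Or.inr hs))
      have ha' : a = ∑ s ∈ S, (decompose 𝒜 (f s * s) n : A) := by
        have h1 : a = ∑ i ∈ S, f i * i := by rw [← hf]; simp [smul_eq_mul]
        conv_lhs => rw [← DirectSum.decompose_of_mem_same 𝒜 ha]
        rw [h1, DirectSum.decompose_sum, DFinsupp.finset_sum_apply,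
          AddSubmonoidClass.coe_finset_sum]
      rw [ha']
      exact sum_mem key

theorem stmt15_closure_eq_top (hA : ∀ n : ℤ, n < 0 → 𝒜 n = ⊥)
    (S : Finset A) (hS : ↑S ⊆ (⋃ (n : ℤ) (_ : 0 < n), (𝒜 n : Set A)))
    (hspan : Ideal.span (↑S : Set A) = Ideal.span (⋃ (n : ℤ) (_ : 0 < n), (𝒜 n : Set A))) :
    Subring.closure ((𝒜 0 : Set A) ∪ ↑S) = ⊤ := by
  rw [eq_top_iff]
  intro a _
  induction a using DirectSum.Decomposition.inductionOn 𝒜 with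
  | zero => exact zero_mem _
  | @homogeneous n c =>
    exact stmt15_homog_mem_closure 𝒜 hA S hS hspan n.toNat n (Int.self_le_toNat _) c.1 c.2
  | add a b ha hb => exact add_mem (ha trivial) (hb trivial)

end Aux

/-- The `d`-th Veronese subring `A^{(d)} = ⨁_{n≥0} A_{dn}` of a ℤ-graded commutative ring. -/
def veronese {A : Type*} [CommRing A] (𝒜 : ℤ → Submodule ℤ A) (d : ℤ) : Subring A :=
  Subring.closure (⋃ n : ℕ, (𝒜 ((n : ℤ) * d) : Set A))

section Aux2

variable {A : Type*} [CommRing A] (𝒜 : ℤ → Submodule ℤ A) [GradedAlgebra 𝒜]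

omit [GradedAlgebra 𝒜] in
theorem stmt15_grade_zero_subset_veronese (d : ℤ) :
    (𝒜 0 : Set A) ⊆ (veronese 𝒜 d : Set A) :=
  fun a ha => Subring.subset_closure <| Set.mem_iUnion.2 ⟨0, by simpa using ha⟩

theorem stmt15_pow_mem_veronese (d : ℤ) (hd : 0 < d) {m : ℤ} (hm : 0 < m) {s : A}
    (hs : s ∈ 𝒜 m) : s ^ d.toNat ∈ veronese 𝒜 d := by
  have h1 : s ^ d.toNat ∈ 𝒜 (d.toNat • m) := SetLike.pow_mem_graded d.toNat hs
  have h2 : (d.toNat : ℤ) • m = (m.toNat : ℤ) * d := by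
    rw [smul_eq_mul, Int.toNat_of_nonneg hd.le, Int.toNat_of_nonneg hm.le]; ring
  refine Subring.subset_closure <| Set.mem_iUnion.2 ⟨m.toNat, ?_⟩
  rw [← h2]
  exact_mod_cast h1

theorem stmt15_top_fg_over_veronese (d : ℤ) (hd : 0 < d)
    (S : Finset A) (hS : ↑S ⊆ (⋃ (n : ℤ) (_ : 0 < n), (𝒜 n : Set A)))
    (hclos : Subring.closure ((𝒜 0 : Set A) ∪ ↑S) = ⊤) :
    (⊤ : Submodule ↥(veronese 𝒜 d) A).FG := by
  classical
  set dnat := d.toNat with hdnat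
  have hd1 : 1 ≤ dnat := by omega
  set R := veronese 𝒜 d with hR
  set W : Set A := {a | ∃ e : A → ℕ, (∀ s ∈ S, e s < dnat) ∧ a = ∏ s ∈ S, s ^ e s} with hW
  set N : Submodule ↥R A := Submodule.span ↥R W with hN
  have hWfin : W.Finite := by
    have : W ⊆ Set.range (fun (e : ↑↑S → Fin dnat) => ∏ s ∈ S.attach, (s : A) ^ ((e s : ℕ))) := by
      rintro a ⟨e, he, rfl⟩
      refine ⟨fun s => ⟨e s, he s s.2⟩, ?_⟩
      simp only
      rw [← Finset.prod_attach S (fun s => s ^ e s)]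
    exact (Set.finite_range _).subset this
  have hone : (1 : A) ∈ W := by
    refine ⟨fun _ => 0, fun s _ => hd1, ?_⟩
    simp
  have hmul : ∀ x : A, (∀ w ∈ W, x * w ∈ N) → ∀ y ∈ N, x * y ∈ N := by
    intro x hx y hy
    induction hy using Submodule.span_induction with
    | mem w hw => exact hx w hw
    | zero => rw [mul_zero]; exact zero_mem _
    | add a b _ _ ha hb => rw [mul_add]; exact add_mem ha hb
    | smul r a _ ha =>
      have : x * (r • a) = r • (x * a) := by
        rcases r with ⟨r, hr⟩
        show x * (r * a) = r * (x * a)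
        ring
      rw [this]
      exact N.smul_mem _ ha
  have main : ∀ a : A, ∀ y ∈ N, a * y ∈ N := by
    intro a
    have ha : a ∈ Subring.closure ((𝒜 0 : Set A) ∪ ↑S) := hclos ▸ trivial
    induction ha using Subring.closure_induction with
    | mem a ha =>
      rcases ha with ha | ha
      · intro y hy
        have : a * y = (⟨a, stmt15_grade_zero_subset_veronese 𝒜 d ha⟩ : ↥R) • y := rfl
        rw [this]
        exact N.smul_mem _ hy
      · refine hmul a ?_
        rintro w ⟨e, he, rfl⟩
        obtain ⟨_, ⟨m, rfl⟩, hms⟩ := hS ha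
        obtain ⟨_, ⟨hm, rfl⟩, ham⟩ := hms
        have hprod : ∀ k : ℕ, (∏ s ∈ S, s ^ (Function.update e a k) s)
            = a ^ k * ∏ s ∈ S.erase a, s ^ e s := by
          intro k
          rw [← Finset.mul_prod_erase S _ ha, Function.update_self]
          congr 1
          refine Finset.prod_congr rfl fun s hs => ?_
          rw [Function.update_of_ne (Finset.ne_of_mem_erase hs)]
        have hkey : a * ∏ s ∈ S, s ^ e s = a ^ (e a + 1) * ∏ s ∈ S.erase a, s ^ e s := by
          rw [← Finset.mul_prod_erase S _ ha, pow_succ]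
          ring
        by_cases hlt : e a + 1 < dnat
        · rw [hkey, ← hprod (e a + 1)]
          refine Submodule.subset_span ⟨Function.update e a (e a + 1), ?_, rfl⟩
          intro s hs
          by_cases h : s = a
          · subst h; rwa [Function.update_self]
          · rw [Function.update_of_ne h]; exact he s hs
        · have heq : e a + 1 = dnat := by
            have := he a ha; omega
          rw [hkey, heq]
          have hw0 : (∏ s ∈ S, s ^ (Function.update e a 0) s) ∈ W := by
            refine ⟨Function.update e a 0, ?_, rfl⟩
            intro s hs
            by_cases h : s = a
            · subst h; rw [Function.update_self]; omega
            · rw [Function.update_of_ne h]; exact he s hs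
          have : a ^ dnat * ∏ s ∈ S.erase a, s ^ e s
              = (⟨a ^ dnat, stmt15_pow_mem_veronese 𝒜 d hd hm ham⟩ : ↥R) •
                (∏ s ∈ S, s ^ (Function.update e a 0) s) := by
            show _ = a ^ dnat * _
            rw [hprod 0, pow_zero, one_mul]
          rw [this]
          exact N.smul_mem _ (Submodule.subset_span hw0)
    | one => intro y hy; rwa [one_mul]
    | zero => intro y hy; rw [zero_mul]; exact zero_mem _
    | add a b _ _ ha hb => intro y hy; rw [add_mul]; exact add_mem (ha y hy) (hb y hy)
    | neg a _ ha => intro y hy; rw [neg_mul]; exact neg_mem (ha y hy)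
    | mul a b _ _ ha hb => intro y hy; rw [mul_assoc]; exact ha _ (hb y hy)
  have hNtop : N = ⊤ := by
    rw [eq_top_iff]
    intro a _
    have := main a 1 (Submodule.subset_span hone)
    rwa [mul_one] at this
  exact ⟨hWfin.toFinset, by rw [Set.Finite.coe_toFinset, ← hN, hNtop]⟩

end Aux2

/-- for an ℕ-graded commutative Noetherian ring `A`, the Veronese subring
`A^{(d)}` is Noetherian for every `d > 0`, and for every finitely generated ℤ-graded
`A`-module `M` the part `⨁_{n≥0} M_{dn}` is a finitely generated `A^{(d)}`-module. -/
theorem stmt15 {A : Type*} [CommRing A] (𝒜 : ℤ → Submodule ℤ A) [GradedAlgebra 𝒜]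
    (hA : ∀ n : ℤ, n < 0 → 𝒜 n = ⊥)
    (hNoeth : IsNoetherianRing A) (d : ℤ) (hd : 0 < d)
    {M : Type*} [AddCommGroup M] [Module A M]
    (ℳ : ℤ → AddSubgroup M) [DirectSum.Decomposition ℳ]
    (hℳ : ∀ (i j : ℤ), ∀ c ∈ 𝒜 i, ∀ m ∈ ℳ j, c • m ∈ ℳ (i + j)) :
    IsNoetherianRing (veronese 𝒜 d) ∧
    (Module.Finite A M →
      ∃ s : Finset M,
        (↑s ⊆ (Submodule.span ℤ (⋃ n : ℕ, (ℳ ((n : ℤ) * d) : Set M)) : Set M)) ∧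
        ∀ m ∈ Submodule.span ℤ (⋃ n : ℕ, (ℳ ((n : ℤ) * d) : Set M)),
          m ∈ Submodule.span ℤ {y : M | ∃ v ∈ veronese 𝒜 d, ∃ x ∈ s, y = v • x}) := by
  classical
  -- homogeneous generators of the irrelevant ideal
  have hfg : (Ideal.span (⋃ (n : ℤ) (_ : 0 < n), (𝒜 n : Set A))).FG :=
    (isNoetherian_def.mp hNoeth) _
  obtain ⟨S, hS, hspan⟩ := exists_finset_gens' _ hfg
  have hclos := stmt15_closure_eq_top 𝒜 hA S hS hspan
  set A₀ := SetLike.GradeZero.subring 𝒜 with hA₀def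
  haveI hA₀ : IsNoetherianRing ↥A₀ := stmt15_A0_noetherian 𝒜 hA hNoeth
  set R := veronese 𝒜 d with hRdef
  have hle : ∀ x : A, x ∈ A₀ → x ∈ R := fun x hx =>
    stmt15_grade_zero_subset_veronese 𝒜 d hx
  letI : Algebra ↥A₀ ↥R := (Subring.inclusion hle).toAlgebra
  haveI : IsScalarTower ↥A₀ ↥R A := IsScalarTower.of_algebraMap_eq (fun x => rfl)
  have hAC : (⊤ : Subalgebra ↥A₀ A).FG := by
    refine ⟨S, eq_top_iff.2 fun a ha' => ?_⟩
    clear ha'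
    have ha : a ∈ Subring.closure ((𝒜 0 : Set A) ∪ ↑S) := hclos ▸ trivial
    induction ha using Subring.closure_induction with
    | mem a ha =>
      rcases ha with ha | ha
      · exact Subalgebra.algebraMap_mem _ (⟨a, ha⟩ : ↥A₀)
      · exact Algebra.subset_adjoin ha
    | one => exact one_mem _
    | zero => exact zero_mem _
    | add a b _ _ ha hb => exact add_mem ha hb
    | neg a _ ha => exact neg_mem ha
    | mul a b _ _ ha hb => exact mul_mem ha hb
  have hBC : (⊤ : Submodule ↥R A).FG := stmt15_top_fg_over_veronese 𝒜 d hd S hS hclos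
  have hBfg : (⊤ : Subalgebra ↥A₀ ↥R).FG :=
    fg_of_fg_of_fg ↥A₀ ↥R A hAC hBC (fun x y h => Subtype.ext h)
  haveI hRN : IsNoetherianRing ↥R := by
    haveI := isNoetherianRing_of_fg hBfg
    exact isNoetherianRing_of_surjective _ _
      ((Subalgebra.topEquiv (R := ↥A₀) (A := ↥R)).toAlgHom.toRingHom)
      Subalgebra.topEquiv.surjective
  refine ⟨hRN, fun hMfin => ?_⟩
  -- module part
  set U : Set M := ⋃ n : ℕ, (ℳ ((n : ℤ) * d) : Set M) with hUdef
  have hsmul : ∀ v : A, v ∈ R → ∀ m ∈ Submodule.span ℤ U, v • m ∈ Submodule.span ℤ U := by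
    intro v hv
    induction hv using Subring.closure_induction with
    | mem c hc =>
      obtain ⟨_, ⟨n, rfl⟩, hcn⟩ := hc
      intro m hm
      induction hm using Submodule.span_induction with
      | mem m hm =>
        obtain ⟨_, ⟨k, rfl⟩, hmk⟩ := hm
        refine Submodule.subset_span (Set.mem_iUnion.2 ⟨n + k, ?_⟩)
        have h1 := hℳ _ _ c hcn m hmk
        have heq : ((n + k : ℕ) : ℤ) * d = (n : ℤ) * d + (k : ℤ) * d := by push_cast; ring
        rw [heq]
        exact h1
      | zero => rw [smul_zero]; exact zero_mem _
      | add a b _ _ ha hb => rw [smul_add]; exact add_mem ha hb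
      | smul z m _ hm =>
        rw [smul_comm]
        exact Submodule.smul_mem _ z hm
    | one => intro m hm; rwa [one_smul]
    | zero => intro m hm; rw [zero_smul]; exact zero_mem _
    | add a b _ _ ha hb => intro m hm; rw [add_smul]; exact add_mem (ha m hm) (hb m hm)
    | neg a _ ha => intro m hm; rw [neg_smul]; exact neg_mem (ha m hm)
    | mul a b _ _ ha hb => intro m hm; rw [mul_smul]; exact ha _ (hb m hm)
  haveI : Module.Finite ↥R A := ⟨hBC⟩
  haveI : Module.Finite ↥R M := Module.Finite.trans A M
  haveI : IsNoetherian ↥R M := isNoetherian_of_isNoetherianRing_of_finite ↥R M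
  set NM : Submodule ↥R M :=
    { carrier := (Submodule.span ℤ U : Set M)
      add_mem' := fun ha hb => add_mem ha hb
      zero_mem' := zero_mem _
      smul_mem' := fun r m hm => hsmul r r.2 m hm } with hNMdef
  obtain ⟨T, hT⟩ : NM.FG := IsNoetherian.noetherian NM
  refine ⟨T, ?_, ?_⟩
  · intro x hx
    have : x ∈ NM := hT ▸ Submodule.subset_span hx
    exact this
  · intro m hm
    have hmN : m ∈ Submodule.span ↥R (↑T : Set M) := by
      rw [hT]; exact hm
    set P : Set M := {y : M | ∃ v ∈ veronese 𝒜 d, ∃ x ∈ T, y = v • x} with hPdef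
    have hstep : ∀ (r : ↥R) (y : M), y ∈ Submodule.span ℤ P → r • y ∈ Submodule.span ℤ P := by
      intro r y hy
      induction hy using Submodule.span_induction with
      | mem y hy =>
        obtain ⟨v, hv, x, hx, rfl⟩ := hy
        refine Submodule.subset_span ⟨(r : A) * v, mul_mem r.2 hv, x, hx, ?_⟩
        show (r : A) • (v • x) = _
        rw [mul_smul]
      | zero => rw [smul_zero]; exact zero_mem _
      | add a b _ _ ha hb => rw [smul_add]; exact add_mem ha hb
      | smul z y _ hy =>
        show (r : A) • (z • y) ∈ _
        rw [smul_comm]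
        exact Submodule.smul_mem _ z hy
    clear hm
    induction hmN using Submodule.span_induction with
    | mem x hx => exact Submodule.subset_span ⟨1, one_mem _, x, hx, (one_smul A x).symm⟩
    | zero => exact zero_mem _
    | add a b _ _ ha hb => exact add_mem ha hb
    | smul r x _ hx => exact hstep r x hx
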